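/- (Gilbert–Varshamov bound.) Let H(δ) = −δ log₂ δ − (1−δ) log₂(1−δ) be the binary entropy function. For every 0 ≤ δ < 1/2 and every 0 < ε ≤ 1 − H(δ), and for every positive integer k such that m = ⌊(1 − H(δ) − ε)·k⌋ ≥ 1, there exists a binary linear code of length k and dimension m (a linear subspace of F₂^k of dimension m) whose minimum Hamming weight over nonzero codewords is at least δ·k. -/
import Mathlib

open Finset Real

/-- The binary entropy function with logarithm base 2. -/
noncomputable def binEnt (δ : ℝ) : ℝ :=
  -δ * Real.logb 2 δ - (1 - δ) * Real.logb 2 (1 - δ)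

lemma card_weight_eq (k j : ℕ) :
    (Finset.univ.filter (fun w : Fin k → ZMod 2 => hammingNorm w = j)).card = k.choose j := by
  have h1 : (Finset.powersetCard j (Finset.univ : Finset (Fin k))).card = k.choose j := by
    simp [Finset.card_powersetCard]
  rw [← h1]
  apply Finset.card_bij (fun w _ => Finset.univ.filter (fun i => w i ≠ 0))
  · intro w hw
    simp only [Finset.mem_filter, Finset.mem_univ, true_and] at hw
    simp [Finset.mem_powersetCard, ← hw, hammingNorm]
  · intro a ha b hb hab
    funext i
    have := Finset.ext_iff.mp hab i
    simp only [Finset.mem_filter, Finset.mem_univ, true_and] at this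
    rcases (by decide : ∀ x : ZMod 2, x = 0 ∨ x = 1) (a i) with h | h <;>
      rcases (by decide : ∀ x : ZMod 2, x = 0 ∨ x = 1) (b i) with h' | h' <;>
      simp_all
  · intro s hs
    simp only [Finset.mem_powersetCard] at hs
    refine ⟨fun i => if i ∈ s then 1 else 0, ?_, ?_⟩
    · simp only [Finset.mem_filter, Finset.mem_univ, true_and, hammingNorm]
      rw [← hs.2]
      congr 1
      ext i
      by_cases h : i ∈ s <;> simp [h]
    · ext i
      by_cases h : i ∈ s <;> simp [h]

lemma card_ball_eq (k t : ℕ) :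
    (Finset.univ.filter (fun w : Fin k → ZMod 2 => hammingNorm w ≤ t)).card
      = ∑ j ∈ Finset.range (t + 1), k.choose j := by
  have : (Finset.univ.filter (fun w : Fin k → ZMod 2 => hammingNorm w ≤ t))
      = (Finset.range (t+1)).biUnion
        (fun j => Finset.univ.filter (fun w : Fin k → ZMod 2 => hammingNorm w = j)) := by
    ext w
    simp only [Finset.mem_filter, Finset.mem_univ, true_and, Finset.mem_biUnion,
      Finset.mem_range]
    constructor
    · intro h; exact ⟨hammingNorm w, by omega, rfl⟩
    · rintro ⟨j, hj, rfl⟩; omega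
  rw [this, Finset.card_biUnion]
  · exact Finset.sum_congr rfl fun j _ => card_weight_eq k j
  · intro a _ b _ hab
    simp only [Finset.disjoint_left, Finset.mem_filter, Finset.mem_univ, true_and]
    rintro w rfl h; exact hab h

lemma sum_choose_le (k : ℕ) (hk : 0 < k) (δ : ℝ) (hδ0 : 0 ≤ δ) (hδ : δ ≤ 1/2) :
    (∑ j ∈ Finset.range (⌊δ * (k:ℝ)⌋₊ + 1), (k.choose j : ℝ)) ≤ 2 ^ (binEnt δ * k) := by
  rcases eq_or_lt_of_le hδ0 with h0 | h0
  · have : δ = 0 := h0.symm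
    subst this
    simp [binEnt, Nat.floor_eq_zero]
  · set t := ⌊δ * (k:ℝ)⌋₊ with ht
    have hδ1 : δ < 1 := by linarith
    have h1δ : 0 < 1 - δ := by linarith
    have htk : (t : ℝ) ≤ δ * k := Nat.floor_le (by positivity)
    have hkR : (1:ℝ) ≤ k := Nat.one_le_cast.mpr hk
    have htkR : (t:ℝ) ≤ k := by nlinarith
    have htk' : t ≤ k := by exact_mod_cast htkR
    have hr0 : 0 < δ / (1-δ) := by positivity
    have hr1 : δ / (1-δ) ≤ 1 := by
      rw [div_le_one h1δ]; linarith
    set P : ℝ := δ ^ (δ * k) * (1-δ) ^ ((1-δ) * k) with hP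
    have hPpos : 0 < P := by positivity
    have point : ∀ j ∈ Finset.range (t+1), P ≤ δ^j * (1-δ)^(k-j) := by
      intro j hj
      rw [Finset.mem_range] at hj
      have hjt : (j:ℝ) ≤ δ * k := le_trans (by exact_mod_cast Nat.lt_succ_iff.mp hj) htk
      have hjk : j ≤ k := le_trans (Nat.lt_succ_iff.mp hj) htk'
      have e1 : δ^j * (1-δ)^(k-j) = (1-δ) ^ ((k:ℝ)) * (δ / (1-δ)) ^ ((j:ℝ)) := by
        rw [Real.div_rpow hδ0 h1δ.le, ← Real.rpow_natCast δ j,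
          ← Real.rpow_natCast (1-δ) (k-j), Nat.cast_sub hjk, Real.rpow_sub h1δ]
        ring
      have e2 : P = (1-δ) ^ ((k:ℝ)) * (δ / (1-δ)) ^ (δ * k) := by
        rw [hP, Real.div_rpow hδ0 h1δ.le]
        have hsub : (1-δ) * k = (k:ℝ) - δ * k := by ring
        rw [hsub, Real.rpow_sub h1δ]
        ring
      rw [e1, e2]
      have := Real.rpow_le_rpow_of_exponent_ge hr0 hr1 hjt
      have h2 : (0:ℝ) ≤ (1-δ) ^ ((k:ℝ)) := by positivity
      exact mul_le_mul_of_nonneg_left this h2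
    have binom : ∑ j ∈ Finset.range (k + 1), δ^j * (1-δ)^(k-j) * (k.choose j : ℝ) = 1 := by
      rw [← add_pow]
      norm_num
    have key : (∑ j ∈ Finset.range (t + 1), (k.choose j : ℝ)) * P ≤ 1 := by
      rw [Finset.sum_mul]
      calc ∑ j ∈ Finset.range (t + 1), (k.choose j : ℝ) * P
          ≤ ∑ j ∈ Finset.range (t + 1), δ^j * (1-δ)^(k-j) * (k.choose j : ℝ) := by
            refine Finset.sum_le_sum fun j hj => ?_
            rw [mul_comm]
            exact mul_le_mul_of_nonneg_right (point j hj) (Nat.cast_nonneg _)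
        _ ≤ ∑ j ∈ Finset.range (k + 1), δ^j * (1-δ)^(k-j) * (k.choose j : ℝ) := by
            refine Finset.sum_le_sum_of_subset_of_nonneg
              (Finset.range_subset_range.mpr (by omega)) fun j _ _ => by positivity
        _ = 1 := binom
    have hPval : P = 2 ^ (-(binEnt δ * k)) := by
      rw [hP, Real.rpow_def_of_pos h0, Real.rpow_def_of_pos h1δ,
        Real.rpow_def_of_pos two_pos, ← Real.exp_add]
      congr 1
      unfold binEnt
      rw [Real.logb, Real.logb]
      have hl2 : Real.log 2 ≠ 0 := ne_of_gt (Real.log_pos (by norm_num))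
      field_simp
      ring
    rw [hPval] at key
    have h2 : (0:ℝ) < 2 ^ (-(binEnt δ * k)) := by positivity
    rw [← le_div_iff₀ h2] at key
    calc (∑ j ∈ Finset.range (t + 1), (k.choose j : ℝ))
        ≤ 1 / 2 ^ (-(binEnt δ * k)) := key
      _ = 2 ^ (binEnt δ * k) := by
          rw [Real.rpow_neg (by norm_num), one_div, inv_inv]

/-- Gilbert–Varshamov bound: for every `0 ≤ δ < 1/2` and
`0 < ε ≤ 1 − H(δ)`, and every length `k` with `m = ⌊(1 − H(δ) − ε)·k⌋ ≥ 1`, there exists a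
binary linear code of length `k` and dimension `m` all of whose nonzero codewords have Hamming
weight at least `δ·k`. -/
theorem gilbert_varshamov (δ ε : ℝ) (hδ0 : 0 ≤ δ) (hδ : δ < 1 / 2)
    (hε0 : 0 < ε) (hε : ε ≤ 1 - binEnt δ)
    (k : ℕ) (hk : 0 < k) (m : ℕ) (hm : m = ⌊(1 - binEnt δ - ε) * (k : ℝ)⌋₊) (hm1 : 1 ≤ m) :
    ∃ B : Submodule (ZMod 2) (Fin k → ZMod 2),
      Module.finrank (ZMod 2) B = m ∧
      ∀ c ∈ B, c ≠ 0 → δ * (k : ℝ) ≤ (hammingNorm c : ℝ) := by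
  classical
  set t := ⌊δ * (k:ℝ)⌋₊ with ht
  set A : Finset (Fin k → ZMod 2) :=
    Finset.univ.filter (fun w => hammingNorm w ≤ t) with hA
  -- bound on m
  have hmle : (m:ℝ) ≤ (1 - binEnt δ - ε) * k := by
    rw [hm]
    apply Nat.floor_le
    by_contra h
    push_neg at h
    rw [Nat.floor_of_nonpos h.le] at hm
    omega
  -- bound on A.card
  have hAcard : (A.card : ℝ) ≤ 2 ^ (binEnt δ * k) := by
    rw [hA, card_ball_eq, ht]
    push_cast
    exact sum_choose_le k hk δ hδ0 hδ.le
  -- main induction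
  have main : ∀ i, i ≤ m → ∃ B : Submodule (ZMod 2) (Fin k → ZMod 2),
      Module.finrank (ZMod 2) B = i ∧
      ∀ c ∈ B, c ≠ 0 → δ * (k : ℝ) ≤ (hammingNorm c : ℝ) := by
    intro i
    induction i with
    | zero =>
      intro _
      refine ⟨⊥, by simp, ?_⟩
      intro c hc hc0
      simp only [Submodule.mem_bot] at hc
      exact absurd hc hc0
    | succ i ih =>
      intro hi
      obtain ⟨B, hBrank, hBw⟩ := ih (by omega)
      set Bs : Finset (Fin k → ZMod 2) := (B : Set (Fin k → ZMod 2)).toFinset with hBs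
      have hBsmem : ∀ y, y ∈ Bs ↔ y ∈ B := by
        intro y; rw [hBs, Set.mem_toFinset]; rfl
      have hBscard : Bs.card = 2 ^ i := by
        rw [hBs, Set.toFinset_card]
        have := Module.card_eq_pow_finrank (K := ZMod 2) (V := B)
        rwa [ZMod.card, hBrank] at this
      set F : Finset (Fin k → ZMod 2) := Bs.biUnion (fun c => A.image (c + ·)) with hF
      have hFmem : ∀ y, y ∈ F ↔ ∃ c ∈ B, ∃ w, hammingNorm w ≤ t ∧ y = c + w := by
        intro y
        rw [hF]
        simp only [Finset.mem_biUnion, Finset.mem_image, hA, Finset.mem_filter,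
          Finset.mem_univ, true_and]
        constructor
        · rintro ⟨c, hc, w, hw, rfl⟩
          exact ⟨c, (hBsmem c).mp hc, w, hw, rfl⟩
        · rintro ⟨c, hc, w, hw, rfl⟩
          exact ⟨c, (hBsmem c).mpr hc, w, hw, rfl⟩
      -- cardinality bound on F
      have hFcard : F.card < 2 ^ k := by
        have h1 : F.card ≤ Bs.card * A.card := by
          rw [hF]
          calc (Bs.biUnion (fun c => A.image (c + ·))).card
              ≤ ∑ c ∈ Bs, (A.image (c + ·)).card := Finset.card_biUnion_le
            _ ≤ ∑ c ∈ Bs, A.card := Finset.sum_le_sum fun c _ => Finset.card_image_le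
            _ = Bs.card * A.card := by rw [Finset.sum_const, smul_eq_mul]
        have h2 : ((2:ℝ) ^ i * 2 ^ (binEnt δ * k)) < 2 ^ (k:ℝ) := by
          have hik : (i:ℝ) + binEnt δ * k < k := by
            have hiR : (i:ℝ) ≤ (m:ℝ) - 1 := by
              have : (i:ℕ) ≤ m - 1 := by omega
              have h' : ((m:ℝ) - 1) = ((m - 1 : ℕ) : ℝ) := by
                have : (1:ℕ) ≤ m := hm1
                push_cast [Nat.cast_sub this]
                ring
              rw [h']
              exact_mod_cast this
            have hkR : (1:ℝ) ≤ k := Nat.one_le_cast.mpr hk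
            have hεk : ε * k ≥ ε := by nlinarith
            nlinarith
          calc (2:ℝ) ^ i * 2 ^ (binEnt δ * k)
              = 2 ^ ((i:ℝ) + binEnt δ * k) := by
                rw [Real.rpow_add two_pos, Real.rpow_natCast]
            _ < 2 ^ ((k:ℝ)) := by
                exact Real.rpow_lt_rpow_of_exponent_lt (by norm_num) hik
        have h3 : (F.card : ℝ) < 2 ^ (k:ℝ) := by
          calc (F.card : ℝ) ≤ (Bs.card : ℝ) * A.card := by exact_mod_cast h1
            _ = (2:ℝ)^i * A.card := by rw [hBscard]; push_cast; ring
            _ ≤ (2:ℝ)^i * 2 ^ (binEnt δ * k) := by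
                apply mul_le_mul_of_nonneg_left hAcard (by positivity)
            _ < 2 ^ ((k:ℝ)) := h2
        have : ((2:ℝ) ^ ((k:ℝ))) = ((2 ^ k : ℕ) : ℝ) := by
          rw [Real.rpow_natCast]; push_cast; ring
        rw [this] at h3
        exact_mod_cast h3
      -- find x outside F
      obtain ⟨x, hxF⟩ : ∃ x, x ∉ F := by
        by_contra h
        push_neg at h
        have hsub : (Finset.univ : Finset (Fin k → ZMod 2)) ⊆ F :=
          fun x _ => h x
        have := Finset.card_le_card hsub
        rw [Finset.card_univ] at this
        have hcard : Fintype.card (Fin k → ZMod 2) = 2 ^ k := by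
          simp [ZMod.card]
        omega
      -- x is not in B
      have hxB : x ∉ B := by
        intro hx
        exact hxF ((hFmem x).mpr ⟨x, hx, 0, by simp, by simp⟩)
      have hx0 : x ≠ 0 := fun h => hxB (h ▸ B.zero_mem)
      -- weight of x + b for b ∈ B
      have hxw : ∀ b ∈ B, δ * (k:ℝ) ≤ (hammingNorm (x + b) : ℝ) := by
        intro b hb
        by_contra h
        push_neg at h
        have hle : hammingNorm (x + b) ≤ t := by
          rw [ht]
          exact Nat.le_floor (le_of_lt h)
        apply hxF
        refine (hFmem x).mpr ⟨-b, B.neg_mem hb, x + b, hle, by ring⟩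
      -- new subspace
      set S := Submodule.span (ZMod 2) ({x} : Set (Fin k → ZMod 2)) with hS
      refine ⟨B ⊔ S, ?_, ?_⟩
      · have hinf : B ⊓ S = ⊥ := by
          rw [Submodule.eq_bot_iff]
          intro y hy
          obtain ⟨hyB, hyS⟩ := Submodule.mem_inf.mp hy
          rw [hS, Submodule.mem_span_singleton] at hyS
          obtain ⟨a, rfl⟩ := hyS
          rcases (by decide : ∀ x : ZMod 2, x = 0 ∨ x = 1) a with h | h
          · rw [h, zero_smul]
          · rw [h, one_smul] at hyB ⊢
            exact absurd hyB hxB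
        have hrankS : Module.finrank (ZMod 2) S = 1 := finrank_span_singleton hx0
        have := Submodule.finrank_sup_add_finrank_inf_eq B S
        rw [hinf, hrankS, hBrank] at this
        simpa using this
      · intro c hc hc0
        rw [Submodule.mem_sup] at hc
        obtain ⟨b, hb, z, hz, rfl⟩ := hc
        rw [hS, Submodule.mem_span_singleton] at hz
        obtain ⟨a, rfl⟩ := hz
        rcases (by decide : ∀ x : ZMod 2, x = 0 ∨ x = 1) a with h | h
        · rw [h, zero_smul, add_zero] at hc0 ⊢
          exact hBw b hb hc0
        · rw [h, one_smul]
          have := hxw b hb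
          rwa [add_comm]
  obtain ⟨B, hB1, hB2⟩ := main m le_rfl
  exact ⟨B, hB1, hB2⟩
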